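/- Let R be a Dedekind domain that is 'replete', i.e., every ideal class of R contains a nonzero prime ideal. Then for every subgroup H of Pic(R) there exists an overring S of R with Pic(S) isomorphic to Pic(R)/H. -/

import Mathlib

open scoped nonZeroDivisors

set_option linter.unusedSectionVars false
set_option maxHeartbeats 1000000
set_option synthInstance.maxHeartbeats 400000

section Aux

variable {R : Type*} [CommRing R] [IsDomain R] [IsDedekindDomain R]
variable {M : Submonoid R}
variable (B : Type*) [CommRing B] [IsDomain B] [Algebra R B] [IsLocalization M B]

theorem aux_map_ne_bot (hM : M ≤ R⁰) {I : Ideal R} (hI : I ≠ ⊥) :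
    Ideal.map (algebraMap R B) I ≠ ⊥ := by
  obtain ⟨a, haI, ha⟩ := Submodule.exists_mem_ne_zero_of_ne_bot hI
  refine Submodule.ne_bot_iff _ |>.mpr ⟨algebraMap R B a, Ideal.mem_map_of_mem _ haI, ?_⟩
  exact fun h => ha (IsLocalization.injective B hM (h.trans (map_zero _).symm))

/-- Extension of nonzero ideals as a monoid hom. -/
noncomputable def auxIdealMap (hM : M ≤ R⁰) : (Ideal R)⁰ →* (Ideal B)⁰ where
  toFun I := ⟨Ideal.map (algebraMap R B) (I : Ideal R),
    mem_nonZeroDivisors_of_ne_zero (aux_map_ne_bot B hM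
      (mem_nonZeroDivisors_iff_ne_zero.mp I.2))⟩
  map_one' := by
    ext
    simp [Ideal.one_eq_top, Ideal.map_top]
  map_mul' I J := by
    ext
    simp [Ideal.map_mul]

theorem aux_coe_idealMap (hM : M ≤ R⁰) (I : (Ideal R)⁰) :
    (auxIdealMap B hM I : Ideal B) = Ideal.map (algebraMap R B) (I : Ideal R) := rfl

/-- The saturation `comap (map I)` differs from `I` by an ideal supported on primes
meeting `M`. -/
theorem aux_sat (hM : M ≤ R⁰) {I : Ideal R} (hI : I ≠ ⊥) :
    ∃ C : Ideal R,
      Ideal.comap (algebraMap R B) (Ideal.map (algebraMap R B) I) * C = I ∧ C ≠ ⊥ ∧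
      ∀ P : Ideal R, P.IsPrime → C ≤ P → ∃ m ∈ M, m ∈ P := by
  set T := Ideal.comap (algebraMap R B) (Ideal.map (algebraMap R B) I) with hT
  have hIT : I ≤ T := Ideal.le_comap_map
  obtain ⟨C, hC⟩ : T ∣ I := Ideal.dvd_iff_le.mpr hIT
  have hTbot : T ≠ ⊥ := fun h => hI (le_bot_iff.mp (h ▸ hIT))
  have hCbot : C ≠ ⊥ := by
    rintro rfl
    rw [Ideal.mul_bot] at hC
    exact hI hC
  refine ⟨C, hC.symm, hCbot, ?_⟩
  intro P hP hCP
  by_contra hcon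
  push_neg at hcon
  have hPbot : P ≠ ⊥ := by
    rintro rfl
    exact hCbot (le_bot_iff.mp hCP)
  have hPprime : Prime P := Ideal.prime_of_isPrime hPbot hP
  have key : ∀ n : ℕ, I ≤ P ^ n → T ≤ P ^ n := by
    intro n hIn r hr
    have : algebraMap R B r ∈ Ideal.map (algebraMap R B) I := hr
    obtain ⟨⟨a, m⟩, hx⟩ := (IsLocalization.mem_map_algebraMap_iff M B).mp this
    have hmr : (m : R) * r ∈ I := by
      have h2 : algebraMap R B ((m : R) * r) = algebraMap R B (a : R) := by
        rw [map_mul, mul_comm]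
        exact hx
      have := IsLocalization.injective B hM h2
      rw [this]; exact a.2
    have hdvd : P ^ n ∣ Ideal.span {(m : R)} * Ideal.span {r} := by
      rw [Ideal.span_singleton_mul_span_singleton, Ideal.dvd_span_singleton]
      exact hIn hmr
    have hnd : ¬ P ∣ Ideal.span {(m : R)} := by
      rw [Ideal.dvd_span_singleton]
      exact fun hm => hcon m m.2 hm
    have := hPprime.pow_dvd_of_dvd_mul_left n hnd hdvd
    rwa [Ideal.dvd_span_singleton] at this
  have hfin : FiniteMultiplicity P I := FiniteMultiplicity.of_prime_left hPprime hI
  classical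
  set n := Nat.find hfin with hn
  have hnd : ¬ P ^ (n + 1) ∣ I := Nat.find_spec hfin
  have hdvd : P ^ n ∣ I := by
    rcases Nat.eq_zero_or_pos n with h0 | hpos
    · rw [h0, pow_zero]; exact one_dvd _
    · obtain ⟨m, hm⟩ := Nat.exists_eq_succ_of_ne_zero hpos.ne'
      have h2 := Nat.find_min hfin (show m < Nat.find hfin by omega)
      rw [hm]
      exact not_not.mp h2
  apply hnd
  have hTn : P ^ n ∣ T := Ideal.dvd_iff_le.mpr (key n (Ideal.dvd_iff_le.mp hdvd))
  have hPC : P ∣ C := Ideal.dvd_iff_le.mpr hCP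
  calc P ^ (n + 1) = P ^ n * P := by ring
  _ ∣ T * C := mul_dvd_mul hTn hPC
  _ = I := hC.symm

/-- An ideal all of whose prime divisors meet `M` has class in `H`,
provided classes of primes meeting `M` lie in `H`. -/
theorem aux_classC (H : Subgroup (ClassGroup R))
    (hMH : ∀ P : (Ideal R)⁰, (P : Ideal R).IsPrime →
      (∃ m ∈ M, m ∈ (P : Ideal R)) → ClassGroup.mk0 P ∈ H)
    (C : Ideal R) (hCpr : ∀ P : Ideal R, P.IsPrime → C ≤ P → ∃ m ∈ M, m ∈ P)
    (hC0 : C ∈ (Ideal R)⁰) : ClassGroup.mk0 ⟨C, hC0⟩ ∈ H := by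
  revert hCpr hC0
  induction C using UniqueFactorizationMonoid.induction_on_prime with
  | h₁ =>
    intro _ hC0
    exact absurd rfl (mem_nonZeroDivisors_iff_ne_zero.mp hC0)
  | h₂ x hx =>
    intro _ hC0
    obtain rfl : x = ⊤ := Ideal.isUnit_iff.mp hx
    have h1 : ClassGroup.mk0 ⟨⊤, hC0⟩ = 1 :=
      (ClassGroup.mk0_eq_one_iff hC0).mpr ⟨⟨1, by simp⟩⟩
    rw [h1]; exact H.one_mem
  | h₃ a p ha hp ih =>
    intro hCpr hC0
    have ha0 : a ∈ (Ideal R)⁰ := mem_nonZeroDivisors_of_ne_zero ha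
    have hp0 : p ∈ (Ideal R)⁰ := mem_nonZeroDivisors_of_ne_zero hp.ne_zero
    have hsplit : (⟨p * a, hC0⟩ : (Ideal R)⁰) = ⟨p, hp0⟩ * ⟨a, ha0⟩ := rfl
    rw [hsplit, map_mul]
    refine H.mul_mem (hMH ⟨p, hp0⟩ (Ideal.isPrime_of_prime hp) ?_) (ih ?_ ha0)
    · exact hCpr p (Ideal.isPrime_of_prime hp) Ideal.mul_le_left
    · intro P hP haP
      exact hCpr P hP (le_trans Ideal.mul_le_right haP)

theorem aux_welldef [IsDedekindDomain B] (hM : M ≤ R⁰) {I J : (Ideal R)⁰}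
    (h : ClassGroup.mk0 I = ClassGroup.mk0 J) :
    ClassGroup.mk0 (auxIdealMap B hM I) = ClassGroup.mk0 (auxIdealMap B hM J) := by
  obtain ⟨x, y, hx, hy, hspan⟩ := ClassGroup.mk0_eq_mk0_iff.mp h
  refine ClassGroup.mk0_eq_mk0_iff.mpr
    ⟨algebraMap R B x, algebraMap R B y, ?_, ?_, ?_⟩
  · exact fun h0 => hx (IsLocalization.injective B hM (h0.trans (map_zero _).symm))
  · exact fun h0 => hy (IsLocalization.injective B hM (h0.trans (map_zero _).symm))
  · have := congrArg (Ideal.map (algebraMap R B)) hspan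
    rw [Ideal.map_mul, Ideal.map_mul, Ideal.map_span, Ideal.map_span,
      Set.image_singleton, Set.image_singleton] at this
    simpa [aux_coe_idealMap] using this

theorem aux_main [IsDedekindDomain B] (hM : M ≤ R⁰) (H : Subgroup (ClassGroup R))
    (hMH : ∀ P : (Ideal R)⁰, (P : Ideal R).IsPrime →
      (∃ m ∈ M, m ∈ (P : Ideal R)) → ClassGroup.mk0 P ∈ H)
    (hHM : ∀ h ∈ H, ∃ P : (Ideal R)⁰,
      (∃ m ∈ M, m ∈ (P : Ideal R)) ∧ ClassGroup.mk0 P = h) :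
    Nonempty (ClassGroup B ≃* ClassGroup R ⧸ H) := by
  classical
  set f : (Ideal R)⁰ →* ClassGroup B :=
    (ClassGroup.mk0 (R := B)).comp (auxIdealMap B hM) with hf
  set φ₀ : ClassGroup R → ClassGroup B :=
    fun c => f (Function.surjInv ClassGroup.mk0_surjective c) with hφ₀
  have hkey : ∀ I : (Ideal R)⁰, φ₀ (ClassGroup.mk0 I) = f I := by
    intro I
    have h1 : ClassGroup.mk0
        (Function.surjInv (ClassGroup.mk0_surjective (R := R)) (ClassGroup.mk0 I)) =
        ClassGroup.mk0 I := Function.surjInv_eq _ _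
    exact aux_welldef B hM h1
  have hmul : ∀ a b : ClassGroup R, φ₀ (a * b) = φ₀ a * φ₀ b := by
    intro a b
    obtain ⟨I, rfl⟩ := ClassGroup.mk0_surjective a
    obtain ⟨J, rfl⟩ := ClassGroup.mk0_surjective b
    rw [← map_mul, hkey, hkey, hkey, map_mul]
  set φ : ClassGroup R →* ClassGroup B := MonoidHom.mk' φ₀ hmul with hφ
  have hφ₀' : ∀ c, φ c = φ₀ c := fun _ => rfl
  have hsurj : Function.Surjective φ := by
    intro c
    obtain ⟨J, rfl⟩ := ClassGroup.mk0_surjective c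
    have hJ0 : (J : Ideal B) ≠ ⊥ := mem_nonZeroDivisors_iff_ne_zero.mp J.2
    have hcom : Ideal.comap (algebraMap R B) (J : Ideal B) ≠ ⊥ := by
      obtain ⟨y, hyJ, hy0⟩ := Submodule.exists_mem_ne_zero_of_ne_bot hJ0
      obtain ⟨⟨a, m⟩, hmk⟩ := IsLocalization.mk'_surjective M y
      have hspec := IsLocalization.mk'_spec B a m
      rw [show IsLocalization.mk' B a m = y from hmk] at hspec
      have hmem : algebraMap R B a ∈ (J : Ideal B) := by
        rw [← hspec]
        exact Ideal.mul_mem_right _ _ hyJ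
      have ha0 : a ≠ 0 := by
        rintro rfl
        rw [map_zero] at hspec
        exact hy0 (by
          rcases mul_eq_zero.mp hspec with h | h
          · exact h
          · exact absurd h (IsLocalization.map_units B m).ne_zero)
      exact Submodule.ne_bot_iff _ |>.mpr ⟨a, hmem, ha0⟩
    refine ⟨ClassGroup.mk0 ⟨Ideal.comap (algebraMap R B) (J : Ideal B),
      mem_nonZeroDivisors_of_ne_zero hcom⟩, ?_⟩
    rw [hφ₀', hkey]
    have hmapc : auxIdealMap B hM ⟨Ideal.comap (algebraMap R B) (J : Ideal B),
        mem_nonZeroDivisors_of_ne_zero hcom⟩ = J :=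
      Subtype.ext (IsLocalization.map_comap M B (J : Ideal B))
    rw [hf, MonoidHom.comp_apply, hmapc]
  have hker : φ.ker = H := by
    ext c
    constructor
    · intro hc
      obtain ⟨I, rfl⟩ := ClassGroup.mk0_surjective c
      rw [MonoidHom.mem_ker, hφ₀', hkey, hf, MonoidHom.comp_apply] at hc
      have hprin : (Ideal.map (algebraMap R B) (I : Ideal R)).IsPrincipal :=
        (ClassGroup.mk0_eq_one_iff _).mp hc
      obtain ⟨⟨y, hy⟩⟩ := hprin
      have hI0 : (I : Ideal R) ≠ ⊥ := mem_nonZeroDivisors_iff_ne_zero.mp I.2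
      have hy0 : y ≠ 0 := by
        rintro rfl
        exact aux_map_ne_bot B hM hI0 (by rw [hy, Submodule.span_zero_singleton])
      obtain ⟨⟨a, m⟩, hmk⟩ := IsLocalization.mk'_surjective M y
      have hspec := IsLocalization.mk'_spec B a m
      rw [show IsLocalization.mk' B a m = y from hmk] at hspec
      have ha0 : a ≠ 0 := by
        rintro rfl
        rw [map_zero] at hspec
        rcases mul_eq_zero.mp hspec with h | h
        · exact hy0 h
        · exact absurd h (IsLocalization.map_units B m).ne_zero
      have hassoc : Associated y (algebraMap R B a) :=
        ⟨(IsLocalization.map_units B m).unit, by rw [IsUnit.unit_spec]; exact hspec⟩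
      have hspan : Ideal.map (algebraMap R B) (I : Ideal R)
          = Ideal.map (algebraMap R B) (Ideal.span {a}) := by
        rw [Ideal.map_span, Set.image_singleton, hy, Ideal.submodule_span_eq,
          Ideal.span_singleton_eq_span_singleton.mpr hassoc]
      have hAbot : Ideal.span {a} ≠ (⊥ : Ideal R) := by
        simpa [Ideal.span_singleton_eq_bot] using ha0
      obtain ⟨C₁, hC₁, hC₁0, hC₁pr⟩ := aux_sat B hM hI0
      obtain ⟨C₂, hC₂, hC₂0, hC₂pr⟩ := aux_sat B hM hAbot
      rw [← hspan] at hC₂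
      set T := Ideal.comap (algebraMap R B) (Ideal.map (algebraMap R B) (I : Ideal R)) with hTdef
      have hT0 : T ≠ ⊥ := by
        intro h
        rw [h, Ideal.bot_mul] at hC₁
        exact hI0 hC₁.symm
      have hTm : T ∈ (Ideal R)⁰ := mem_nonZeroDivisors_of_ne_zero hT0
      have hC₁m : C₁ ∈ (Ideal R)⁰ := mem_nonZeroDivisors_of_ne_zero hC₁0
      have hC₂m : C₂ ∈ (Ideal R)⁰ := mem_nonZeroDivisors_of_ne_zero hC₂0
      have heq1 : I = (⟨T, hTm⟩ : (Ideal R)⁰) * ⟨C₁, hC₁m⟩ := Subtype.ext hC₁.symm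
      have hAm : Ideal.span {a} ∈ (Ideal R)⁰ :=
        mem_nonZeroDivisors_of_ne_zero hAbot
      have heq2 : (⟨Ideal.span {a}, hAm⟩ : (Ideal R)⁰)
          = (⟨T, hTm⟩ : (Ideal R)⁰) * ⟨C₂, hC₂m⟩ := Subtype.ext hC₂.symm
      have hAone : ClassGroup.mk0 (⟨Ideal.span {a}, hAm⟩ : (Ideal R)⁰) = 1 :=
        (ClassGroup.mk0_eq_one_iff hAm).mpr ⟨⟨a, by simp [Ideal.submodule_span_eq]⟩⟩
      have h1 : ClassGroup.mk0 (⟨T, hTm⟩ : (Ideal R)⁰)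
          * ClassGroup.mk0 (⟨C₂, hC₂m⟩ : (Ideal R)⁰) = 1 := by
        rw [← map_mul, ← heq2, hAone]
      have hTc : ClassGroup.mk0 (⟨T, hTm⟩ : (Ideal R)⁰)
          = (ClassGroup.mk0 (⟨C₂, hC₂m⟩ : (Ideal R)⁰))⁻¹ := by
        rw [eq_inv_iff_mul_eq_one]
        rw [mul_comm]
        rw [mul_comm] at h1
        exact h1
      have hc1H : ClassGroup.mk0 (⟨C₁, hC₁m⟩ : (Ideal R)⁰) ∈ H :=
        aux_classC H hMH C₁ hC₁pr hC₁m
      have hc2H : ClassGroup.mk0 (⟨C₂, hC₂m⟩ : (Ideal R)⁰) ∈ H :=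
        aux_classC H hMH C₂ hC₂pr hC₂m
      rw [heq1, map_mul, hTc]
      exact H.mul_mem (H.inv_mem hc2H) hc1H
    · intro hc
      obtain ⟨P, ⟨m, hmM, hmP⟩, rfl⟩ := hHM c hc
      rw [MonoidHom.mem_ker, hφ₀', hkey, hf, MonoidHom.comp_apply]
      have htop : Ideal.map (algebraMap R B) (P : Ideal R) = ⊤ :=
        Ideal.eq_top_of_isUnit_mem _ (Ideal.mem_map_of_mem _ hmP)
          (IsLocalization.map_units B ⟨m, hmM⟩)
      have h1 : auxIdealMap B hM P = 1 := by
        apply Subtype.ext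
        rw [aux_coe_idealMap]
        simpa [Ideal.one_eq_top] using htop
      rw [h1, map_one]
  exact ⟨((QuotientGroup.quotientKerEquivOfSurjective φ hsurj).symm.trans
    (QuotientGroup.quotientMulEquivOfEq hker))⟩

end Aux

/-- Let `R` be a replete Dedekind domain, i.e. every ideal class of `R` contains a
nonzero prime ideal.  Then for every subgroup `H` of `Pic(R)` there exists an overring
`S` of `R` (an intermediate ring `R ⊆ S ⊆ K`) with `Pic(S) ≅ Pic(R)/H`. -/
theorem replete_quotient_classGroup (R : Type*) [CommRing R] [IsDomain R]
    [IsDedekindDomain R] (K : Type*) [Field K] [Algebra R K] [IsFractionRing R K]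
    (hreplete : ∀ c : ClassGroup R, ∃ 𝔭 : (Ideal R)⁰,
      (𝔭 : Ideal R).IsPrime ∧ ClassGroup.mk0 𝔭 = c)
    (H : Subgroup (ClassGroup R)) :
    ∃ S : Subalgebra R K, Nonempty (ClassGroup S ≃* ClassGroup R ⧸ H) := by
  classical
  obtain ⟨𝔭, h𝔭⟩ := Classical.axiomOfChoice hreplete
  have h𝔭prime : ∀ c, (𝔭 c : Ideal R).IsPrime := fun c => (h𝔭 c).1
  have h𝔭mk : ∀ c, ClassGroup.mk0 (𝔭 c) = c := fun c => (h𝔭 c).2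
  have hprin : ∀ c : ClassGroup R,
      ∃ a : R, ((𝔭 c * 𝔭 c⁻¹ : (Ideal R)⁰) : Ideal R) = Ideal.span {a} := by
    intro c
    have h1 : ClassGroup.mk0 (𝔭 c * 𝔭 c⁻¹) = 1 := by
      rw [map_mul, h𝔭mk, h𝔭mk, mul_inv_cancel]
    obtain ⟨⟨a, ha⟩⟩ := (ClassGroup.mk0_eq_one_iff (𝔭 c * 𝔭 c⁻¹).2).mp h1
    exact ⟨a, by rw [ha, Ideal.submodule_span_eq]⟩
  choose x hx using hprin
  have hxne : ∀ c, x c ≠ 0 := by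
    intro c hc
    have h0 : ((𝔭 c * 𝔭 c⁻¹ : (Ideal R)⁰) : Ideal R) ≠ 0 :=
      mem_nonZeroDivisors_iff_ne_zero.mp (𝔭 c * 𝔭 c⁻¹).2
    apply h0
    rw [hx c, hc, Ideal.span_singleton_eq_bot.mpr rfl]
    rfl
  set X : Set R := x '' (H : Set (ClassGroup R)) with hX
  set M : Submonoid R := Submonoid.closure X with hMdef
  have hM : M ≤ R⁰ := by
    rw [hMdef, Submonoid.closure_le]
    rintro _ ⟨c, _, rfl⟩
    exact mem_nonZeroDivisors_of_ne_zero (hxne c)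
  set S := Localization.subalgebra K M hM with hSdef
  haveI : IsDedekindDomain S := IsLocalization.isDedekindDomain R hM S
  -- classes of primes meeting M lie in H
  have hgen : ∀ (P : (Ideal R)⁰), (P : Ideal R).IsPrime →
      ∀ c ∈ H, x c ∈ (P : Ideal R) → ClassGroup.mk0 P ∈ H := by
    intro P hP c hc hxP
    have hPbot : (P : Ideal R) ≠ ⊥ := mem_nonZeroDivisors_iff_ne_zero.mp P.2
    have hPpr : Prime (P : Ideal R) := Ideal.prime_of_isPrime hPbot hP
    have h1 : (P : Ideal R) ∣ Ideal.span {x c} := Ideal.dvd_span_singleton.mpr hxP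
    rw [← hx c, Submonoid.coe_mul] at h1
    rcases hPpr.2.2 _ _ h1 with h | h
    · have hmax : (𝔭 c : Ideal R).IsMaximal :=
        Ideal.IsPrime.isMaximal (h𝔭prime c) (mem_nonZeroDivisors_iff_ne_zero.mp (𝔭 c).2)
      have heq : 𝔭 c = P :=
        Subtype.ext (hmax.eq_of_le hP.ne_top (Ideal.dvd_iff_le.mp h))
      rw [← heq, h𝔭mk]
      exact hc
    · have hmax : (𝔭 c⁻¹ : Ideal R).IsMaximal :=
        Ideal.IsPrime.isMaximal (h𝔭prime c⁻¹)
          (mem_nonZeroDivisors_iff_ne_zero.mp (𝔭 c⁻¹).2)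
      have heq : 𝔭 c⁻¹ = P :=
        Subtype.ext (hmax.eq_of_le hP.ne_top (Ideal.dvd_iff_le.mp h))
      rw [← heq, h𝔭mk]
      exact H.inv_mem hc
  have hMH : ∀ P : (Ideal R)⁰, (P : Ideal R).IsPrime →
      (∃ m ∈ M, m ∈ (P : Ideal R)) → ClassGroup.mk0 P ∈ H := by
    rintro P hP ⟨m, hmM, hmP⟩
    rw [hMdef] at hmM
    revert hmP
    induction hmM using Submonoid.closure_induction with
    | mem y hy =>
      obtain ⟨c, hc, rfl⟩ := hy
      exact fun hyP => hgen P hP c hc hyP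
    | one =>
      intro h1
      exact absurd (Ideal.eq_top_iff_one _ |>.mpr h1) hP.ne_top
    | mul a b _ _ iha ihb =>
      intro hab
      rcases hP.mem_or_mem hab with h | h
      · exact iha h
      · exact ihb h
  have hHM : ∀ h ∈ H, ∃ P : (Ideal R)⁰,
      (∃ m ∈ M, m ∈ (P : Ideal R)) ∧ ClassGroup.mk0 P = h := by
    intro h hh
    refine ⟨𝔭 h, ⟨x h, ?_, ?_⟩, h𝔭mk h⟩
    · exact Submonoid.subset_closure ⟨h, hh, rfl⟩
    · have : Ideal.span {x h} ≤ (𝔭 h : Ideal R) := by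
        rw [← hx h, Submonoid.coe_mul]
        exact Ideal.mul_le_left
      exact this (Ideal.mem_span_singleton_self _)
  exact ⟨S, aux_main S hM H hMH hHM⟩
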